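/- arXiv:2501.14941 — 2 statements merged into one kernel-verified Lean document; each statement's English description precedes it below -/
import Mathlib

section
/- Second-order variation of an entropy difference with a scaled component: let γ > 0 and for g : ℝ → ℝ write g_γ(x) := (1/γ)·g(x/γ). Let f₁, f₂ : ℝ → ℝ be continuous probability densities with f₂(x) > 0 and (f₁ ⋆ (f₂)_γ)(x) > 0 for all x, with x ↦ f₂(x)·log(f₂(x)) and x ↦ (f₁ ⋆ (f₂)_γ)(x)·log((f₁ ⋆ (f₂)_γ)(x)) integrable, and let h₂ : ℝ → ℝ be continuous with compact support. Under domination hypotheses guaranteeing twice differentiation under the integral sign (there exist ε₀ > 0 and integrable Φ, Ψ with, for all x and |ε| ≤ ε₀: |(f₁ ⋆ (h₂)_γ)(x)|·(1 + |log((f₁ ⋆ (f₂ + ε·h₂)_γ)(x))|) + |h₂(x)|·(1 + |log(f₂(x) + ε·h₂(x))|) ≤ Φ(x) and (f₁ ⋆ (h₂)_γ)(x)²/(f₁ ⋆ (f₂ + ε·h₂)_γ)(x) + h₂(x)²/(f₂(x) + ε·h₂(x)) ≤ Ψ(x)), the second derivative at ε = 0 of the function ε ↦ [−∫ (f₁ ⋆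 (f₂ + ε·h₂)_γ)(x)·log((f₁ ⋆ (f₂ + ε·h₂)_γ)(x)) dx] − [−∫ (f₂(x) + ε·h₂(x))·log(f₂(x) + ε·h₂(x)) dx] equals ∫ ( h₂(x)²/f₂(x) − (f₁ ⋆ (h₂)_γ)(x)²/(f₁ ⋆ (f₂)_γ)(x) ) dx. -/
open MeasureTheory

/-- Convolution of two functions on ℝ (with respect to Lebesgue measure). -/
noncomputable def conv (p q : ℝ → ℝ) : ℝ → ℝ :=
  fun x => ∫ t : ℝ, p t * q (x - t)

/-- The `γ`-scaling of a function: `g_γ(x) = (1/γ)·g(x/γ)`. -/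
noncomputable def scaleFn (γ : ℝ) (g : ℝ → ℝ) : ℝ → ℝ :=
  fun x => (1 / γ) * g (x / γ)


lemma pos_of_logbound {p q C ε₀ : ℝ} (hε₀ : 0 < ε₀) (hp : 0 < p)
    (hb : ∀ ε : ℝ, |ε| ≤ ε₀ → |q| * (1 + |Real.log (p + ε * q)|) ≤ C) :
    ∀ ε : ℝ, |ε| ≤ ε₀ → 0 < p + ε * q := by
  intro ε hε
  by_contra hle
  push_neg at hle
  have hq : q ≠ 0 := by
    rintro rfl
    simp only [mul_zero, add_zero] at hle
    linarith
  have hq' : 0 < |q| := abs_pos.mpr hq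
  set M : ℝ := C / |q| - 1 with hMdef
  have hM : ∀ ε' : ℝ, |ε'| ≤ ε₀ → |Real.log (p + ε' * q)| ≤ M := by
    intro ε' h
    have h1 := hb ε' h
    have h2 : 1 + |Real.log (p + ε' * q)| ≤ C / |q| := by
      rw [le_div_iff₀ hq']
      linarith [mul_comm (|q|) (1 + |Real.log (p + ε' * q)|)]
    simp only [hMdef]; linarith
  set v : ℝ := min p (Real.exp (-(M + 1))) / 2 with hvdef
  have hv0 : 0 < v := div_pos (lt_min hp (Real.exp_pos _)) (by norm_num)
  have hvlt : v < Real.exp (-M) := by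
    have h1 : v ≤ Real.exp (-(M + 1)) / 2 :=
      div_le_div_of_nonneg_right (min_le_right _ _) (by norm_num)
    have h2 : Real.exp (-(M + 1)) < Real.exp (-M) := Real.exp_lt_exp.mpr (by linarith)
    linarith [Real.exp_pos (-(M + 1))]
  have hlogv : Real.log v < -M := by
    have := Real.log_lt_log hv0 hvlt
    rwa [Real.log_exp] at this
  have hvp : v < p := by
    have : v ≤ p / 2 := div_le_div_of_nonneg_right (min_le_left _ _) (by norm_num)
    linarith
  -- intermediate value
  have hcont : ContinuousOn (fun s : ℝ => p + s * q) (Set.uIcc 0 ε) :=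
    (continuous_const.add (continuous_id.mul continuous_const)).continuousOn
  have hmem : v ∈ Set.uIcc (p + (0:ℝ) * q) (p + ε * q) := by
    rw [Set.mem_uIcc]
    right
    exact ⟨by linarith, by simpa using hvp.le⟩
  obtain ⟨ε₂, hε₂mem, hε₂⟩ := intermediate_value_uIcc hcont hmem
  have hε₂abs : |ε₂| ≤ ε₀ := by
    have hb' := abs_le.mp hε
    rcases Set.mem_uIcc.mp hε₂mem with ⟨h1, h2⟩ | ⟨h1, h2⟩ <;>
      rw [abs_le] <;> constructor <;> linarith
  have := hM ε₂ hε₂abs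
  simp only at hε₂
  rw [hε₂] at this
  linarith [neg_abs_le (Real.log v)]


lemma key_lemma (p q Φ Ψ : ℝ → ℝ)
    (hp : AEStronglyMeasurable p (volume : Measure ℝ))
    (hq : AEStronglyMeasurable q (volume : Measure ℝ))
    (hplog : Integrable (fun x => p x * Real.log (p x)))
    (ε₀ : ℝ) (hε₀ : 0 < ε₀) (hΦ : Integrable Φ) (hΨ : Integrable Ψ)
    (hd1 : ∀ x ε : ℝ, |ε| ≤ ε₀ → |q x| * (1 + |Real.log (p x + ε * q x)|) ≤ Φ x)
    (hd2 : ∀ x ε : ℝ, |ε| ≤ ε₀ → (q x) ^ 2 / (p x + ε * q x) ≤ Ψ x)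
    (hpos : ∀ x ε : ℝ, |ε| ≤ ε₀ → 0 < p x + ε * q x) :
    Integrable (fun x => (q x) ^ 2 / p x) ∧
    ∃ D : ℝ → ℝ,
      (∀ ε ∈ Metric.ball (0 : ℝ) ε₀,
        HasDerivAt (fun ε : ℝ => ∫ x : ℝ, (p x + ε * q x) * Real.log (p x + ε * q x)) (D ε) ε) ∧
      HasDerivAt D (∫ x : ℝ, (q x) ^ 2 / p x) 0 := by
  set F : ℝ → ℝ → ℝ := fun ε x => (p x + ε * q x) * Real.log (p x + ε * q x) with hF
  set F' : ℝ → ℝ → ℝ := fun ε x => q x * (Real.log (p x + ε * q x) + 1) with hF'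
  set F'' : ℝ → ℝ → ℝ := fun ε x => (q x) ^ 2 / (p x + ε * q x) with hF''
  have hmeas : ∀ ε : ℝ, AEStronglyMeasurable (fun x => p x + ε * q x) volume :=
    fun ε => hp.add (hq.const_mul ε)
  have hmeaslog : ∀ ε : ℝ, AEStronglyMeasurable (fun x => Real.log (p x + ε * q x)) volume :=
    fun ε => (Real.measurable_log.comp_aemeasurable (hmeas ε).aemeasurable).aestronglyMeasurable
  have hmeasF : ∀ ε : ℝ, AEStronglyMeasurable (F ε) volume :=
    fun ε => (hmeas ε).mul (hmeaslog ε)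
  have hmeasF' : ∀ ε : ℝ, AEStronglyMeasurable (F' ε) volume :=
    fun ε => hq.mul ((hmeaslog ε).add aestronglyMeasurable_const)
  have hq2 : AEStronglyMeasurable (fun x => (q x) ^ 2) (volume : Measure ℝ) := by
    simpa [sq] using hq.fun_mul hq
  have hmeasF'' : ∀ ε : ℝ, AEStronglyMeasurable (F'' ε) volume :=
    fun ε => (hq2.aemeasurable.div (hmeas ε).aemeasurable).aestronglyMeasurable
  -- pointwise derivatives
  have hu : ∀ x ε : ℝ, HasDerivAt (fun s : ℝ => p x + s * q x) (q x) ε := by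
    intro x ε
    simpa using ((hasDerivAt_id ε).mul_const (q x)).const_add (p x)
  have hlogd : ∀ x ε : ℝ, |ε| ≤ ε₀ →
      HasDerivAt (fun s : ℝ => Real.log (p x + s * q x)) ((p x + ε * q x)⁻¹ * q x) ε := by
    intro x ε hε
    exact (Real.hasDerivAt_log (hpos x ε hε).ne').comp ε (hu x ε)
  have hderiv1 : ∀ x ε : ℝ, |ε| ≤ ε₀ → HasDerivAt (fun s => F s x) (F' ε x) ε := by
    intro x ε hε
    have h := (hu x ε).fun_mul (hlogd x ε hε)
    refine h.congr_deriv ?_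
    have hne := (hpos x ε hε).ne'
    simp only [hF']
    rw [← mul_assoc, mul_inv_cancel₀ hne, one_mul]
    ring
  have hderiv2 : ∀ x ε : ℝ, |ε| ≤ ε₀ → HasDerivAt (fun s => F' s x) (F'' ε x) ε := by
    intro x ε hε
    have h := ((hlogd x ε hε).add_const 1).const_mul (q x)
    refine h.congr_deriv ?_
    simp only [hF'']
    rw [sq, div_eq_mul_inv]
    ring
  -- bounds
  have hbound1 : ∀ x ε : ℝ, |ε| ≤ ε₀ → ‖F' ε x‖ ≤ Φ x := by
    intro x ε hε
    have h1 : |Real.log (p x + ε * q x) + 1| ≤ 1 + |Real.log (p x + ε * q x)| := by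
      rw [add_comm (1 : ℝ)]
      exact (abs_add_le _ _).trans (by simp)
    calc ‖F' ε x‖ = |q x| * |Real.log (p x + ε * q x) + 1| := by
          rw [Real.norm_eq_abs, hF', abs_mul]
      _ ≤ |q x| * (1 + |Real.log (p x + ε * q x)|) :=
          mul_le_mul_of_nonneg_left h1 (abs_nonneg _)
      _ ≤ Φ x := hd1 x ε hε
  have hbound2 : ∀ x ε : ℝ, |ε| ≤ ε₀ → ‖F'' ε x‖ ≤ Ψ x := by
    intro x ε hε
    rw [Real.norm_eq_abs, abs_of_nonneg (div_nonneg (sq_nonneg _) (hpos x ε hε).le)]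
    exact hd2 x ε hε
  -- integrability of F ε
  have hF0 : Integrable (F 0) := by simpa [hF] using hplog
  have hFint : ∀ ε : ℝ, |ε| ≤ ε₀ → Integrable (F ε) := by
    intro ε hε
    have hmvt : ∀ x : ℝ, ‖F ε x - F 0 x‖ ≤ Φ x * ‖ε - 0‖ := by
      intro x
      refine Convex.norm_image_sub_le_of_norm_hasDerivWithin_le
        (f := fun s => F s x) (f' := fun s => F' s x) (s := Set.Icc (-ε₀) ε₀)
        (fun s hs => (hderiv1 x s (abs_le.mpr ⟨hs.1, hs.2⟩)).hasDerivWithinAt)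
        (fun s hs => hbound1 x s (abs_le.mpr ⟨hs.1, hs.2⟩))
        (convex_Icc _ _) ⟨by linarith, hε₀.le⟩ (Set.mem_Icc.mpr (abs_le.mp hε))
    have hsub : Integrable (fun x => F ε x - F 0 x) := by
      refine Integrable.mono' (hΦ.mul_const ‖ε - 0‖) ((hmeasF ε).sub (hmeasF 0))
        (Filter.Eventually.of_forall hmvt)
    have : F ε = fun x => F 0 x + (F ε x - F 0 x) := by funext x; ring
    rw [this]
    exact hF0.add hsub
  -- first derivative everywhere on the ball
  have hD : ∀ ε₁ ∈ Metric.ball (0 : ℝ) ε₀,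
      Integrable (F' ε₁) ∧
        HasDerivAt (fun ε => ∫ x : ℝ, F ε x) (∫ x : ℝ, F' ε₁ x) ε₁ := by
    intro ε₁ hε₁
    rw [Metric.mem_ball, Real.dist_eq, sub_zero] at hε₁
    have hrpos : 0 < ε₀ - |ε₁| := by linarith
    have hball : ∀ ε ∈ Metric.ball ε₁ (ε₀ - |ε₁|), |ε| ≤ ε₀ := by
      intro ε hε
      rw [Metric.mem_ball, Real.dist_eq] at hε
      calc |ε| ≤ |ε - ε₁| + |ε₁| := by
            simpa using abs_add_le (ε - ε₁) ε₁
        _ ≤ ε₀ := by linarith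
    exact hasDerivAt_integral_of_dominated_loc_of_deriv_le (Metric.ball_mem_nhds ε₁ hrpos)
      (Filter.Eventually.of_forall fun ε => hmeasF ε)
      (hFint ε₁ hε₁.le) (hmeasF' ε₁)
      (Filter.Eventually.of_forall fun x ε hε => hbound1 x ε (hball ε hε)) hΦ
      (Filter.Eventually.of_forall fun x ε hε => hderiv1 x ε (hball ε hε))
  -- second derivative at 0
  have h0ball : (0 : ℝ) ∈ Metric.ball (0 : ℝ) ε₀ := Metric.mem_ball_self hε₀
  have hballabs : ∀ ε ∈ Metric.ball (0 : ℝ) ε₀, |ε| ≤ ε₀ := by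
    intro ε hε
    rw [Metric.mem_ball, Real.dist_eq, sub_zero] at hε
    exact hε.le
  obtain ⟨hint2, hd2'⟩ := hasDerivAt_integral_of_dominated_loc_of_deriv_le (Metric.ball_mem_nhds 0 hε₀)
    (Filter.Eventually.of_forall fun ε => hmeasF' ε)
    ((hD 0 h0ball).1) (hmeasF'' 0)
    (Filter.Eventually.of_forall fun x ε hε => hbound2 x ε (hballabs ε hε)) hΨ
    (Filter.Eventually.of_forall fun x ε hε => hderiv2 x ε (hballabs ε hε))
  have hF''0 : F'' 0 = fun x => (q x) ^ 2 / p x := by funext x; simp [hF'']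
  rw [hF''0] at hint2 hd2'
  exact ⟨hint2, fun ε => ∫ x : ℝ, F' ε x, fun ε hε => (hD ε hε).2, hd2'⟩

/-- second-order variation of the entropy difference
`H^{f₁ ⋆ (f₂)_γ} − H^{f₂}` with a scaled component: under the stated
domination hypotheses, the second derivative at `ε = 0` of
`ε ↦ [−∫ (f₁ ⋆ (f₂ + εh₂)_γ)·log(f₁ ⋆ (f₂ + εh₂)_γ)] − [−∫ (f₂ + εh₂)·log(f₂ + εh₂)]`
equals `∫ ( h₂²/f₂ − (f₁ ⋆ (h₂)_γ)²/(f₁ ⋆ (f₂)_γ) )`. -/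
theorem stmt_9 (γ : ℝ) (hγ : 0 < γ) (f₁ f₂ h₂ : ℝ → ℝ)
    (hf₁c : Continuous f₁) (hf₁nn : ∀ᵐ x : ℝ, 0 ≤ f₁ x) (hf₁int : ∫ x : ℝ, f₁ x = 1)
    (hf₂c : Continuous f₂) (hf₂nn : ∀ᵐ x : ℝ, 0 ≤ f₂ x) (hf₂int : ∫ x : ℝ, f₂ x = 1)
    (hf₂pos : ∀ x, 0 < f₂ x)
    (hpos : ∀ x, 0 < conv f₁ (scaleFn γ f₂) x)
    (hlog₂ : Integrable (fun x : ℝ => f₂ x * Real.log (f₂ x)))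
    (hlog : Integrable (fun x : ℝ =>
      conv f₁ (scaleFn γ f₂) x * Real.log (conv f₁ (scaleFn γ f₂) x)))
    (hh₂ : Continuous h₂) (hh₂supp : HasCompactSupport h₂)
    (ε₀ : ℝ) (hε₀ : 0 < ε₀) (Φ Ψ : ℝ → ℝ) (hΦ : Integrable Φ) (hΨ : Integrable Ψ)
    (hdom₁ : ∀ x : ℝ, ∀ ε : ℝ, |ε| ≤ ε₀ →
      |conv f₁ (scaleFn γ h₂) x| *
        (1 + |Real.log (conv f₁ (scaleFn γ (fun t => f₂ t + ε * h₂ t)) x)|) +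
      |h₂ x| * (1 + |Real.log (f₂ x + ε * h₂ x)|) ≤ Φ x)
    (hdom₂ : ∀ x : ℝ, ∀ ε : ℝ, |ε| ≤ ε₀ →
      (conv f₁ (scaleFn γ h₂) x) ^ 2 /
          conv f₁ (scaleFn γ (fun t => f₂ t + ε * h₂ t)) x +
        (h₂ x) ^ 2 / (f₂ x + ε * h₂ x) ≤ Ψ x) :
    iteratedDeriv 2
      (fun ε : ℝ =>
        (-∫ x : ℝ,
          conv f₁ (scaleFn γ (fun t => f₂ t + ε * h₂ t)) x *
            Real.log (conv f₁ (scaleFn γ (fun t => f₂ t + ε * h₂ t)) x)) -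
        (-∫ x : ℝ, (f₂ x + ε * h₂ x) * Real.log (f₂ x + ε * h₂ x))) 0 =
      ∫ x : ℝ,
        ((h₂ x) ^ 2 / f₂ x -
          (conv f₁ (scaleFn γ h₂) x) ^ 2 / conv f₁ (scaleFn γ f₂) x) := by
  have hγ' : γ ≠ 0 := hγ.ne'
  -- integrability of f₁, f₂
  have hf₁I : Integrable f₁ := by
    by_contra h
    rw [integral_undef h] at hf₁int
    norm_num at hf₁int
  have hf₂I : Integrable f₂ := by
    by_contra h
    rw [integral_undef h] at hf₂int
    norm_num at hf₂int
  set s₂ : ℝ → ℝ := scaleFn γ f₂ with hs₂def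
  set sh : ℝ → ℝ := scaleFn γ h₂ with hshdef
  set a : ℝ → ℝ := conv f₁ s₂ with hadef
  set b : ℝ → ℝ := conv f₁ sh with hbdef
  -- basic properties of the scalings
  have hshc : Continuous sh := by
    rw [hshdef]
    exact continuous_const.mul (hh₂.comp (continuous_id.div_const γ))
  obtain ⟨C, hC⟩ : ∃ C : ℝ, ∀ y : ℝ, |sh y| ≤ C := by
    have hcs : HasCompactSupport sh := by
      have : sh = fun y => (1 / γ) * (h₂ ∘ fun y : ℝ => y / γ) y := rfl
      rw [this]
      refine HasCompactSupport.mul_left ?_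
      have he : (fun y : ℝ => y / γ) = fun y : ℝ => (Homeomorph.mulRight₀ γ⁻¹ (by simpa using hγ')) y := by
        funext y; simp [div_eq_mul_inv]
      rw [he]
      exact hh₂supp.comp_homeomorph _
    obtain ⟨C, hC⟩ := (hshc.norm).bddAbove_range_of_hasCompactSupport hcs.norm
    exact ⟨C, fun y => hC ⟨y, rfl⟩⟩
  have hs₂I : Integrable s₂ := (hf₂I.comp_div hγ').const_mul _
  have hshI : Integrable sh :=
    ((hh₂.integrable_of_hasCompactSupport hh₂supp).comp_div hγ').const_mul _
  -- pointwise integrability of convolution integrands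
  have hI1 : ∀ x : ℝ, Integrable (fun t => f₁ t * sh (x - t)) := by
    intro x
    refine Integrable.mono' (hf₁I.norm.mul_const C)
      ((hf₁c.mul (hshc.comp (continuous_const.sub continuous_id))).aestronglyMeasurable)
      (Filter.Eventually.of_forall fun t => ?_)
    rw [norm_mul]
    exact mul_le_mul_of_nonneg_left (hC _) (norm_nonneg _)
  have hI2 : ∀ x : ℝ, Integrable (fun t => f₁ t * s₂ (x - t)) := by
    intro x
    by_contra h
    exact (hpos x).ne' (integral_undef h)
  -- linearity of the perturbed convolution
  have hlin : ∀ (ε : ℝ) (x : ℝ),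
      conv f₁ (scaleFn γ (fun t => f₂ t + ε * h₂ t)) x = a x + ε * b x := by
    intro ε x
    have h1 : ∀ t : ℝ, f₁ t * scaleFn γ (fun t => f₂ t + ε * h₂ t) (x - t) =
        f₁ t * s₂ (x - t) + ε * (f₁ t * sh (x - t)) := by
      intro t
      simp only [scaleFn, hs₂def, hshdef]
      ring
    show (∫ t : ℝ, f₁ t * scaleFn γ (fun t => f₂ t + ε * h₂ t) (x - t)) = _
    simp only [h1]
    rw [integral_add (hI2 x) ((hI1 x).const_mul ε), integral_const_mul]
    rfl
  -- measurability of a, b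
  have haI : Integrable a := by
    have h := Integrable.integrable_convolution (L := ContinuousLinearMap.mul ℝ ℝ)
      (μ := volume) hf₁I hs₂I
    have he : MeasureTheory.convolution f₁ s₂ (ContinuousLinearMap.mul ℝ ℝ) volume = a := by
      funext x
      rw [MeasureTheory.convolution_def]
      rfl
    rwa [he] at h
  have hbI : Integrable b := by
    have h := Integrable.integrable_convolution (L := ContinuousLinearMap.mul ℝ ℝ)
      (μ := volume) hf₁I hshI
    have he : MeasureTheory.convolution f₁ sh (ContinuousLinearMap.mul ℝ ℝ) volume = b := by
      funext x
      rw [MeasureTheory.convolution_def]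
      rfl
    rwa [he] at h
  -- positivity of the perturbed densities
  have hpos₂ : ∀ x ε : ℝ, |ε| ≤ ε₀ → 0 < f₂ x + ε * h₂ x := by
    intro x
    refine pos_of_logbound (C := Φ x) hε₀ (hf₂pos x) (fun ε hε => ?_)
    have h := hdom₁ x ε hε
    have h0 : 0 ≤ |b x| * (1 + |Real.log (conv f₁ (scaleFn γ (fun t => f₂ t + ε * h₂ t)) x)|) :=
      mul_nonneg (abs_nonneg _) (by positivity)
    linarith
  have hposA : ∀ x ε : ℝ, |ε| ≤ ε₀ → 0 < a x + ε * b x := by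
    intro x
    refine pos_of_logbound (C := Φ x) hε₀ (hpos x) (fun ε hε => ?_)
    have h := hdom₁ x ε hε
    rw [hlin ε x] at h
    have h0 : 0 ≤ |h₂ x| * (1 + |Real.log (f₂ x + ε * h₂ x)|) :=
      mul_nonneg (abs_nonneg _) (by positivity)
    linarith
  -- domination hypotheses in split form
  have hd1A : ∀ x ε : ℝ, |ε| ≤ ε₀ → |b x| * (1 + |Real.log (a x + ε * b x)|) ≤ Φ x := by
    intro x ε hε
    have h := hdom₁ x ε hε
    rw [hlin ε x] at h
    have h0 : 0 ≤ |h₂ x| * (1 + |Real.log (f₂ x + ε * h₂ x)|) :=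
      mul_nonneg (abs_nonneg _) (by positivity)
    linarith
  have hd1₂ : ∀ x ε : ℝ, |ε| ≤ ε₀ → |h₂ x| * (1 + |Real.log (f₂ x + ε * h₂ x)|) ≤ Φ x := by
    intro x ε hε
    have h := hdom₁ x ε hε
    have h0 : 0 ≤ |b x| * (1 + |Real.log (conv f₁ (scaleFn γ (fun t => f₂ t + ε * h₂ t)) x)|) :=
      mul_nonneg (abs_nonneg _) (by positivity)
    linarith
  have hd2A : ∀ x ε : ℝ, |ε| ≤ ε₀ → (b x) ^ 2 / (a x + ε * b x) ≤ Ψ x := by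
    intro x ε hε
    have h := hdom₂ x ε hε
    rw [hlin ε x] at h
    have h0 : 0 ≤ (h₂ x) ^ 2 / (f₂ x + ε * h₂ x) :=
      div_nonneg (sq_nonneg _) (hpos₂ x ε hε).le
    linarith
  have hd2₂ : ∀ x ε : ℝ, |ε| ≤ ε₀ → (h₂ x) ^ 2 / (f₂ x + ε * h₂ x) ≤ Ψ x := by
    intro x ε hε
    have h := hdom₂ x ε hε
    rw [hlin ε x] at h
    have h0 : 0 ≤ (b x) ^ 2 / (a x + ε * b x) :=
      div_nonneg (sq_nonneg _) (hposA x ε hε).le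
    linarith
  -- apply the key lemma twice
  obtain ⟨hintA, DA, hDA, hDA'⟩ := key_lemma a b Φ Ψ haI.aestronglyMeasurable
    hbI.aestronglyMeasurable hlog ε₀ hε₀ hΦ hΨ hd1A hd2A hposA
  obtain ⟨hint₂, D₂, hD₂, hD₂'⟩ := key_lemma f₂ h₂ Φ Ψ hf₂c.aestronglyMeasurable
    hh₂.aestronglyMeasurable hlog₂ ε₀ hε₀ hΦ hΨ hd1₂ hd2₂ hpos₂
  -- assemble
  have hφ : (fun ε : ℝ =>
        (-∫ x : ℝ,
          conv f₁ (scaleFn γ (fun t => f₂ t + ε * h₂ t)) x *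
            Real.log (conv f₁ (scaleFn γ (fun t => f₂ t + ε * h₂ t)) x)) -
        (-∫ x : ℝ, (f₂ x + ε * h₂ x) * Real.log (f₂ x + ε * h₂ x))) =
      fun ε : ℝ =>
        (∫ x : ℝ, (f₂ x + ε * h₂ x) * Real.log (f₂ x + ε * h₂ x)) -
        (∫ x : ℝ, (a x + ε * b x) * Real.log (a x + ε * b x)) := by
    funext ε
    have h1 : (fun x : ℝ => conv f₁ (scaleFn γ (fun t => f₂ t + ε * h₂ t)) x *
        Real.log (conv f₁ (scaleFn γ (fun t => f₂ t + ε * h₂ t)) x)) =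
        fun x : ℝ => (a x + ε * b x) * Real.log (a x + ε * b x) := by
      funext x
      rw [hlin ε x]
    rw [h1]
    ring
  rw [hφ]
  have hDer : ∀ ε ∈ Metric.ball (0 : ℝ) ε₀,
      HasDerivAt (fun ε : ℝ =>
        (∫ x : ℝ, (f₂ x + ε * h₂ x) * Real.log (f₂ x + ε * h₂ x)) -
        (∫ x : ℝ, (a x + ε * b x) * Real.log (a x + ε * b x))) (D₂ ε - DA ε) ε :=
    fun ε hε => (hD₂ ε hε).sub (hDA ε hε)
  have hEq : deriv (fun ε : ℝ =>
        (∫ x : ℝ, (f₂ x + ε * h₂ x) * Real.log (f₂ x + ε * h₂ x)) -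
        (∫ x : ℝ, (a x + ε * b x) * Real.log (a x + ε * b x))) =ᶠ[nhds 0]
      fun ε => D₂ ε - DA ε := by
    filter_upwards [Metric.ball_mem_nhds (0 : ℝ) hε₀] with ε hε using (hDer ε hε).deriv
  rw [iteratedDeriv_succ, iteratedDeriv_one, hEq.deriv_eq, (hD₂'.fun_sub hDA').deriv,
    ← integral_sub hint₂ hintA]
end

section
/- First-order variation of the mutual-information functional with Gaussian noise: let σ² > 0, let n = φ_{σ²} be the centered Gaussian density of variance σ², let f₁, f₂ : ℝ → ℝ be continuous probability densities such that (f₁ ⋆ f₂ ⋆ n)(x) > 0 and (f₂ ⋆ n)(x) > 0 for all x, with x ↦ (f₁ ⋆ f₂ ⋆ n)(x)·log((f₁ ⋆ f₂ ⋆ n)(x)) and x ↦ (f₂ ⋆ n)(x)·log((f₂ ⋆ n)(x)) integrable, and let h₂ : ℝ → ℝ be continuous with compact support. Under a domination hypothesis (there exist ε₀ > 0 and integrable Φ with |(f₁ ⋆ h₂ ⋆ n)(x)|·(1 + |log((f₁ ⋆ (f₂ + ε·h₂) ⋆ n)(x))|) + |(h₂ ⋆ n)(x)|·(1 + |log(((f₂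 + ε·h₂) ⋆ n)(x))|) ≤ Φ(x) for all x and |ε| ≤ ε₀), the function ε ↦ [−∫ (f₁ ⋆ (f₂ + ε·h₂) ⋆ n)·log(f₁ ⋆ (f₂ + ε·h₂) ⋆ n)] − [−∫ ((f₂ + ε·h₂) ⋆ n)·log((f₂ + ε·h₂) ⋆ n)] has derivative at ε = 0 equal to −∫ (f₁ ⋆ h₂ ⋆ n)(x)·(log((f₁ ⋆ f₂ ⋆ n)(x)) + 1) dx + ∫ (h₂ ⋆ n)(x)·(log((f₂ ⋆ n)(x)) + 1) dx. -/
open MeasureTheory Convolution Set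

/-- The centered Gaussian density of variance `v`. -/
noncomputable def gaussianDensity (v : ℝ) (x : ℝ) : ℝ :=
  (Real.sqrt (2 * Real.pi * v))⁻¹ * Real.exp (-(x ^ 2) / (2 * v))

/-- If the domination bound holds on `[-ε₀, ε₀]`, the affine path never vanishes there. -/
lemma aux_ne_of_dom {a b φ ε₀ : ℝ} (ha : 0 < a) (hε₀ : 0 < ε₀)
    (hb : ∀ ε : ℝ, |ε| ≤ ε₀ → |b| * (1 + |Real.log (a + ε * b)|) ≤ φ) :
    ∀ ε : ℝ, |ε| ≤ ε₀ → a + ε * b ≠ 0 := by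
  intro ε hε hzero
  by_cases hb0 : b = 0
  · rw [hb0, mul_zero, add_zero] at hzero; exact ha.ne' hzero
  have hbabs : 0 < |b| := abs_pos.mpr hb0
  have hφ : |b| ≤ φ := by
    have h0 := hb 0 (by simpa using hε₀.le)
    simp only [zero_mul, add_zero] at h0
    nlinarith [abs_nonneg (Real.log a)]
  set δ : ℝ := min ε₀ (Real.exp (-(φ / |b|)) / |b|) with hδdef
  have hδpos : 0 < δ := lt_min hε₀ (div_pos (Real.exp_pos _) hbabs)
  have hδε₀ : δ ≤ ε₀ := min_le_left _ _
  set s : ℝ := if 0 ≤ ε then ε - δ else ε + δ with hsdef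
  have hs : |s| ≤ ε₀ := by
    rcases le_or_gt 0 ε with h | h
    · simp only [hsdef, if_pos h]
      rw [abs_le] at hε ⊢; constructor <;> nlinarith
    · simp only [hsdef, if_neg (not_le.mpr h)]
      rw [abs_le] at hε ⊢; constructor <;> nlinarith
  have hsv : a + s * b = (s - ε) * b := by linear_combination hzero
  have habsδ : |s - ε| = δ := by
    rcases le_or_gt 0 ε with h | h
    · simp only [hsdef, if_pos h]
      rw [show ε - δ - ε = -δ by ring, abs_neg, abs_of_pos hδpos]
    · simp only [hsdef, if_neg (not_le.mpr h)]
      rw [show ε + δ - ε = δ by ring, abs_of_pos hδpos]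
  have habsv : |a + s * b| = δ * |b| := by rw [hsv, abs_mul, habsδ]
  have hlogval : Real.log (a + s * b) = Real.log (δ * |b|) := by
    rw [← Real.log_abs, habsv]
  have hle : δ * |b| ≤ Real.exp (-(φ / |b|)) := by
    have := min_le_right ε₀ (Real.exp (-(φ / |b|)) / |b|)
    calc δ * |b| ≤ (Real.exp (-(φ / |b|)) / |b|) * |b| := by nlinarith
      _ = Real.exp (-(φ / |b|)) := by field_simp
  have hlogle : Real.log (δ * |b|) ≤ -(φ / |b|) := by
    rw [Real.log_le_iff_le_exp (by positivity)]; exact hle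
  have hφdiv : 0 ≤ φ / |b| := div_nonneg (le_trans hbabs.le hφ) hbabs.le
  have hlogabs_ge : φ / |b| ≤ |Real.log (a + s * b)| := by
    rw [hlogval]
    calc φ / |b| ≤ -(Real.log (δ * |b|)) := by linarith
      _ ≤ |Real.log (δ * |b|)| := neg_le_abs _
  have h5 : |b| * (φ / |b|) ≤ |b| * |Real.log (a + s * b)| :=
    mul_le_mul_of_nonneg_left hlogabs_ge (abs_nonneg b)
  have h6 : |b| * (φ / |b|) = φ := by field_simp
  nlinarith [hb s hs]

/-- Left-linearity step. -/
lemma aux_conv_add_smul (g h k : ℝ → ℝ) (ε x : ℝ)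
    (hg : Integrable fun t => g t * k (x - t))
    (hh : Integrable fun t => h t * k (x - t)) :
    conv (fun t => g t + ε * h t) k x = conv g k x + ε * conv h k x := by
  unfold conv
  rw [← integral_const_mul, ← integral_add hg (hh.const_mul ε)]
  congr 1; funext t; ring

/-- Right-linearity step. -/
lemma aux_conv_right_add_smul (g C D : ℝ → ℝ) (ε x : ℝ)
    (h1 : Integrable fun t => g t * C (x - t))
    (h2 : Integrable fun t => g t * D (x - t)) :
    conv g (fun y => C y + ε * D y) x = conv g C x + ε * conv g D x := by
  unfold conv
  rw [← integral_const_mul, ← integral_add h1 (h2.const_mul ε)]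
  congr 1; funext t; ring

/-- Integrability of the convolution integrand. -/
lemma aux_integrand_integrable {g k : ℝ → ℝ} (hg : Integrable g) (hk : Continuous k)
    {M : ℝ} (hkb : ∀ y, |k y| ≤ M) (x : ℝ) :
    Integrable fun t => g t * k (x - t) := by
  have h := hg.bdd_mul (c := M) ((hk.comp (continuous_const.sub continuous_id)).aestronglyMeasurable)
    (Filter.Eventually.of_forall fun t => by simpa [Real.norm_eq_abs] using hkb (x - t))
  simpa [mul_comm] using h

/-- Uniform bound on a convolution. -/
lemma aux_conv_bound {g k : ℝ → ℝ} (hg : Integrable g) {M : ℝ}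
    (hkb : ∀ y, |k y| ≤ M) (x : ℝ) :
    |conv g k x| ≤ (∫ t, |g t|) * M := by
  unfold conv
  have h0 : 0 ≤ M := le_trans (abs_nonneg _) (hkb 0)
  calc |∫ t, g t * k (x - t)| ≤ ∫ t, |g t| * |k (x - t)| := by
        simpa [Real.norm_eq_abs, abs_mul] using
          norm_integral_le_integral_norm (μ := volume) (fun t => g t * k (x - t))
    _ ≤ ∫ t, |g t| * M := by
        apply integral_mono_of_nonneg
          (Filter.Eventually.of_forall fun t => mul_nonneg (abs_nonneg _) (abs_nonneg _))
          (hg.abs.mul_const M)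
        filter_upwards with t
        exact mul_le_mul_of_nonneg_left (hkb _) (abs_nonneg _)
    _ = (∫ t, |g t|) * M := by rw [integral_mul_const]

/-- Continuity of a convolution with integrable left factor and bounded continuous right factor. -/
lemma aux_conv_continuous {g k : ℝ → ℝ} (hg : Integrable g) (hk : Continuous k)
    {M : ℝ} (hkb : ∀ y, |k y| ≤ M) : Continuous (conv g k) := by
  rw [show conv g k = g ⋆[ContinuousLinearMap.mul ℝ ℝ, volume] k from rfl]
  have hb : BddAbove (Set.range fun y => ‖k y‖) := by
    refine ⟨M, ?_⟩
    rintro _ ⟨y, rfl⟩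
    simpa [Real.norm_eq_abs] using hkb y
  exact BddAbove.continuous_convolution_right_of_integrable
    (L := ContinuousLinearMap.mul ℝ ℝ) hb hg hk

/-- first-order variation of the mutual-information functional
`H^{f₁⋆f₂⋆n} − H^{f₂⋆n}` with Gaussian noise `n = φ_{σ²}`: under the stated
domination hypothesis, the map
`ε ↦ [−∫ (f₁ ⋆ (f₂+εh₂) ⋆ n)·log(f₁ ⋆ (f₂+εh₂) ⋆ n)] − [−∫ ((f₂+εh₂) ⋆ n)·log((f₂+εh₂) ⋆ n)]`
has derivative
`−∫ (f₁ ⋆ h₂ ⋆ n)·(log(f₁ ⋆ f₂ ⋆ n) + 1) + ∫ (h₂ ⋆ n)·(log(f₂ ⋆ n) + 1)`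
at `ε = 0`. -/
theorem stmt_10 (σ2 : ℝ) (hσ2 : 0 < σ2) (f₁ f₂ h₂ : ℝ → ℝ)
    (n : ℝ → ℝ) (hn : n = gaussianDensity σ2)
    (hf₁c : Continuous f₁) (hf₁nn : ∀ᵐ x : ℝ, 0 ≤ f₁ x) (hf₁int : ∫ x : ℝ, f₁ x = 1)
    (hf₂c : Continuous f₂) (hf₂nn : ∀ᵐ x : ℝ, 0 ≤ f₂ x) (hf₂int : ∫ x : ℝ, f₂ x = 1)
    (hpos₁ : ∀ x, 0 < conv f₁ (conv f₂ n) x)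
    (hpos₂ : ∀ x, 0 < conv f₂ n x)
    (hlog₁ : Integrable (fun x : ℝ =>
      conv f₁ (conv f₂ n) x * Real.log (conv f₁ (conv f₂ n) x)))
    (hlog₂ : Integrable (fun x : ℝ => conv f₂ n x * Real.log (conv f₂ n x)))
    (hh₂ : Continuous h₂) (hh₂supp : HasCompactSupport h₂)
    (ε₀ : ℝ) (hε₀ : 0 < ε₀) (Φ : ℝ → ℝ) (hΦ : Integrable Φ)
    (hdom : ∀ x : ℝ, ∀ ε : ℝ, |ε| ≤ ε₀ →
      |conv f₁ (conv h₂ n) x| *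
        (1 + |Real.log (conv f₁ (conv (fun t => f₂ t + ε * h₂ t) n) x)|) +
      |conv h₂ n x| *
        (1 + |Real.log (conv (fun t => f₂ t + ε * h₂ t) n x)|) ≤ Φ x) :
    HasDerivAt
      (fun ε : ℝ =>
        (-∫ x : ℝ,
          conv f₁ (conv (fun t => f₂ t + ε * h₂ t) n) x *
            Real.log (conv f₁ (conv (fun t => f₂ t + ε * h₂ t) n) x)) -
        (-∫ x : ℝ,
          conv (fun t => f₂ t + ε * h₂ t) n x *
            Real.log (conv (fun t => f₂ t + ε * h₂ t) n x)))
      ((-∫ x : ℝ, conv f₁ (conv h₂ n) x * (Real.log (conv f₁ (conv f₂ n) x) + 1)) +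
        ∫ x : ℝ, conv h₂ n x * (Real.log (conv f₂ n x) + 1)) 0 := by
  -- basic integrability
  have hif₁ : Integrable f₁ := by
    by_contra h; rw [integral_undef h] at hf₁int; norm_num at hf₁int
  have hif₂ : Integrable f₂ := by
    by_contra h; rw [integral_undef h] at hf₂int; norm_num at hf₂int
  have hih₂ : Integrable h₂ := hh₂.integrable_of_hasCompactSupport hh₂supp
  -- Gaussian noise: continuity and boundedness
  have hnc : Continuous n := by
    rw [hn]; unfold gaussianDensity
    exact continuous_const.mul (Real.continuous_exp.comp (by fun_prop))
  set Mn : ℝ := (Real.sqrt (2 * Real.pi * σ2))⁻¹ with hMn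
  have hnb : ∀ y, |n y| ≤ Mn := by
    intro y
    rw [hn]; unfold gaussianDensity
    have h1 : Real.exp (-(y ^ 2) / (2 * σ2)) ≤ 1 := by
      rw [Real.exp_le_one_iff]
      exact div_nonpos_of_nonpos_of_nonneg (neg_nonpos.mpr (sq_nonneg y)) (by positivity)
    have h2 : (0:ℝ) < Real.sqrt (2 * Real.pi * σ2) := by
      apply Real.sqrt_pos.mpr; positivity
    rw [abs_of_nonneg (by positivity)]
    calc (Real.sqrt (2 * Real.pi * σ2))⁻¹ * Real.exp (-(y ^ 2) / (2 * σ2))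
        ≤ (Real.sqrt (2 * Real.pi * σ2))⁻¹ * 1 :=
          mul_le_mul_of_nonneg_left h1 (by positivity)
      _ = Mn := by rw [mul_one]
  -- the four basic functions
  set A := conv f₁ (conv f₂ n) with hA
  set B := conv f₁ (conv h₂ n) with hB
  set C := conv f₂ n with hC
  set D := conv h₂ n with hD
  have hCc : Continuous C := aux_conv_continuous hif₂ hnc hnb
  have hDc : Continuous D := aux_conv_continuous hih₂ hnc hnb
  have hCb : ∀ y, |C y| ≤ (∫ t, |f₂ t|) * Mn := fun y => aux_conv_bound hif₂ hnb y
  have hDb : ∀ y, |D y| ≤ (∫ t, |h₂ t|) * Mn := fun y => aux_conv_bound hih₂ hnb y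
  have hAc : Continuous A := aux_conv_continuous hif₁ hCc hCb
  have hBc : Continuous B := aux_conv_continuous hif₁ hDc hDb
  -- linearity
  have hlin₂ : ∀ ε x : ℝ, conv (fun t => f₂ t + ε * h₂ t) n x = C x + ε * D x := by
    intro ε x
    exact aux_conv_add_smul f₂ h₂ n ε x (aux_integrand_integrable hif₂ hnc hnb x)
      (aux_integrand_integrable hih₂ hnc hnb x)
  have hlin₁ : ∀ ε x : ℝ,
      conv f₁ (conv (fun t => f₂ t + ε * h₂ t) n) x = A x + ε * B x := by
    intro ε x
    have h1 : conv (fun t => f₂ t + ε * h₂ t) n = fun y => C y + ε * D y :=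
      funext fun y => hlin₂ ε y
    rw [h1]
    exact aux_conv_right_add_smul f₁ C D ε x (aux_integrand_integrable hif₁ hCc hCb x)
      (aux_integrand_integrable hif₁ hDc hDb x)
  -- rewrite the domination hypothesis
  have hdom' : ∀ x : ℝ, ∀ ε : ℝ, |ε| ≤ ε₀ →
      |B x| * (1 + |Real.log (A x + ε * B x)|) +
      |D x| * (1 + |Real.log (C x + ε * D x)|) ≤ Φ x := by
    intro x ε hε
    have := hdom x ε hε
    rwa [hlin₁ ε x, hlin₂ ε x] at this
  have hbound₁ : ∀ x : ℝ, ∀ ε : ℝ, |ε| ≤ ε₀ →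
      |B x| * (1 + |Real.log (A x + ε * B x)|) ≤ Φ x := by
    intro x ε hε
    have h := hdom' x ε hε
    nlinarith [abs_nonneg (D x), abs_nonneg (Real.log (C x + ε * D x))]
  have hbound₂ : ∀ x : ℝ, ∀ ε : ℝ, |ε| ≤ ε₀ →
      |D x| * (1 + |Real.log (C x + ε * D x)|) ≤ Φ x := by
    intro x ε hε
    have h := hdom' x ε hε
    nlinarith [abs_nonneg (B x), abs_nonneg (Real.log (A x + ε * B x))]
  -- nonvanishing
  have hne₁ : ∀ x : ℝ, ∀ ε : ℝ, |ε| ≤ ε₀ → A x + ε * B x ≠ 0 := fun x =>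
    aux_ne_of_dom (hpos₁ x) hε₀ (hbound₁ x)
  have hne₂ : ∀ x : ℝ, ∀ ε : ℝ, |ε| ≤ ε₀ → C x + ε * D x ≠ 0 := fun x =>
    aux_ne_of_dom (hpos₂ x) hε₀ (hbound₂ x)
  -- derivative of the first integral
  have key : ∀ (P Q : ℝ → ℝ), Continuous P → Continuous Q → (∀ x, 0 < P x) →
      Integrable (fun x => P x * Real.log (P x)) →
      (∀ x : ℝ, ∀ ε : ℝ, |ε| ≤ ε₀ → |Q x| * (1 + |Real.log (P x + ε * Q x)|) ≤ Φ x) →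
      (∀ x : ℝ, ∀ ε : ℝ, |ε| ≤ ε₀ → P x + ε * Q x ≠ 0) →
      HasDerivAt (fun ε : ℝ => ∫ x : ℝ, (P x + ε * Q x) * Real.log (P x + ε * Q x))
        (∫ x : ℝ, Q x * (Real.log (P x) + 1)) 0 := by
    intro P Q hPc hQc hPpos hPint hQbound hQne
    have hlogP : Continuous fun x => Real.log (P x) := by
      rw [continuous_iff_continuousAt]
      intro x
      exact (Real.continuousAt_log (hPpos x).ne').comp hPc.continuousAt
    have hF'0 : Continuous fun x => Q x * (Real.log (P x + 0 * Q x) + 1) := by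
      have heq : (fun x => Q x * (Real.log (P x + 0 * Q x) + 1)) =
          fun x => Q x * (Real.log (P x) + 1) := by funext x; norm_num
      rw [heq]; exact hQc.mul (hlogP.add continuous_const)
    have main := hasDerivAt_integral_of_dominated_loc_of_deriv_le (μ := volume) (x₀ := (0:ℝ))
      (F := fun ε x => (P x + ε * Q x) * Real.log (P x + ε * Q x))
      (F' := fun ε x => Q x * (Real.log (P x + ε * Q x) + 1))
      (bound := Φ) (s := Metric.ball 0 ε₀) (Metric.ball_mem_nhds 0 hε₀)
      (Filter.Eventually.of_forall fun ε =>
        (Real.Continuous.mul_log (hPc.add (continuous_const.mul hQc))).aestronglyMeasurable)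
      (by simpa using hPint)
      hF'0.aestronglyMeasurable
      ?_ hΦ ?_
    · have h0 : (fun x : ℝ => Q x * (Real.log (P x + 0 * Q x) + 1)) =
          fun x => Q x * (Real.log (P x) + 1) := by funext x; norm_num
      rw [h0] at main
      exact main.2
    · filter_upwards with x
      intro ε hε
      have hε' : |ε| ≤ ε₀ := by
        rw [Metric.mem_ball, Real.dist_eq, sub_zero] at hε
        exact hε.le
      have h1 : ‖Q x * (Real.log (P x + ε * Q x) + 1)‖ ≤
          |Q x| * (1 + |Real.log (P x + ε * Q x)|) := by
        rw [Real.norm_eq_abs, abs_mul]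
        refine mul_le_mul_of_nonneg_left ?_ (abs_nonneg _)
        calc |Real.log (P x + ε * Q x) + 1| ≤ |Real.log (P x + ε * Q x)| + |(1:ℝ)| :=
              abs_add_le _ _
          _ = 1 + |Real.log (P x + ε * Q x)| := by rw [abs_one]; ring
      exact h1.trans (hQbound x ε hε')
    · filter_upwards with x
      intro ε hε
      have hε' : |ε| ≤ ε₀ := by
        rw [Metric.mem_ball, Real.dist_eq, sub_zero] at hε
        exact hε.le
      have hz : P x + ε * Q x ≠ 0 := hQne x ε hε'
      have haff : HasDerivAt (fun ε : ℝ => P x + ε * Q x) (Q x) ε := by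
        simpa using ((hasDerivAt_id ε).mul_const (Q x)).const_add (P x)
      have hcomp := (Real.hasDerivAt_mul_log hz).comp ε haff
      exact hcomp.congr_deriv (mul_comm _ _)
  have hd₁ := key A B hAc hBc hpos₁ hlog₁ hbound₁ hne₁
  have hd₂ := key C D hCc hDc hpos₂ hlog₂ hbound₂ hne₂
  have hfun : (fun ε : ℝ =>
        (-∫ x : ℝ,
          conv f₁ (conv (fun t => f₂ t + ε * h₂ t) n) x *
            Real.log (conv f₁ (conv (fun t => f₂ t + ε * h₂ t) n) x)) -
        (-∫ x : ℝ,
          conv (fun t => f₂ t + ε * h₂ t) n x *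
            Real.log (conv (fun t => f₂ t + ε * h₂ t) n x))) =
      fun ε : ℝ =>
        (-∫ x : ℝ, (A x + ε * B x) * Real.log (A x + ε * B x)) -
        (-∫ x : ℝ, (C x + ε * D x) * Real.log (C x + ε * D x)) := by
    funext ε
    simp only [hlin₁, hlin₂]
  rw [hfun]
  have H := (hd₁.neg).sub (hd₂.neg)
  exact H.congr_deriv (by ring)
end
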